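/- Let k and p be positive integers and let γ = kp + 1. Then the tree T(p,…,p) (with k groups, each of size p) has domination number γ and has exactly 2^(γ−1) + k · 2^p · (2^p − 1)^(k−1) minimum dominating sets. -/

import Mathlib

/-- `D` is a dominating set of `G`: every vertex outside `D` has a neighbor in `D`. -/
def Dominates {V : Type*} (G : SimpleGraph V) (D : Set V) : Prop :=
  ∀ v ∉ D, ∃ u ∈ D, G.Adj u v

/-- The domination number of `G`: the minimum cardinality of a dominating set. -/
noncomputable def domN {V : Type*} (G : SimpleGraph V) : ℕ :=
  sInf {n | ∃ D : Set V, Dominates G D ∧ D.ncard = n}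

/-- `D` is a minimum dominating set of `G`. -/
def MinDomSet {V : Type*} (G : SimpleGraph V) (D : Set V) : Prop :=
  Dominates G D ∧ D.ncard = domN G

/-- The number of minimum dominating sets of `G`. -/
noncomputable def numMinDomSets {V : Type*} (G : SimpleGraph V) : ℕ :=
  {D : Set V | MinDomSet G D}.ncard

/-- An endvertex: a vertex of degree at most 1. -/
def IsEndvtx {V : Type*} (G : SimpleGraph V) (v : V) : Prop :=
  (G.neighborSet v).ncard ≤ 1

/-- A strong support vertex: a vertex adjacent to at least two endvertices. -/
def IsStrongSupportVtx {V : Type*} (G : SimpleGraph V) (v : V) : Prop :=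
  ∃ a b : V, a ≠ b ∧ G.Adj v a ∧ G.Adj v b ∧ IsEndvtx G a ∧ IsEndvtx G b

/-- The tree `T(p 0, …, p (k-1))`: a root `x = Sum.inl ()`, vertices
`w i = Sum.inr (Sum.inl i)` adjacent to `x`, vertices
`v i j = Sum.inr (Sum.inr (Sum.inl ⟨i, j⟩))` adjacent to `w i`, and endvertices
`u i j = Sum.inr (Sum.inr (Sum.inr ⟨i, j⟩))` adjacent to `v i j`. -/
def TreeT {k : ℕ} (p : Fin k → ℕ) :
    SimpleGraph (Unit ⊕ Fin k ⊕ (Σ i : Fin k, Fin (p i)) ⊕ (Σ i : Fin k, Fin (p i))) :=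
  SimpleGraph.fromRel fun a b =>
    (∃ i : Fin k, a = Sum.inl () ∧ b = Sum.inr (Sum.inl i)) ∨
    (∃ (i : Fin k) (j : Fin (p i)),
      a = Sum.inr (Sum.inl i) ∧ b = Sum.inr (Sum.inr (Sum.inl ⟨i, j⟩))) ∨
    (∃ (i : Fin k) (j : Fin (p i)),
      a = Sum.inr (Sum.inr (Sum.inl ⟨i, j⟩)) ∧ b = Sum.inr (Sum.inr (Sum.inr ⟨i, j⟩)))

namespace TT

variable {k p : ℕ}

abbrev S (k p : ℕ) := Σ _ : Fin k, Fin p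
abbrev V (k p : ℕ) := Unit ⊕ Fin k ⊕ S k p ⊕ S k p

def x : V k p := Sum.inl ()
def w (i : Fin k) : V k p := Sum.inr (Sum.inl i)
def vv (s : S k p) : V k p := Sum.inr (Sum.inr (Sum.inl s))
def uu (s : S k p) : V k p := Sum.inr (Sum.inr (Sum.inr s))

abbrev G (k p : ℕ) : SimpleGraph (V k p) := TreeT (fun _ : Fin k => p)

lemma sig_ext {s t : S k p} (h1 : s.1 = t.1) (h2 : s.2 = t.2) : s = t := by
  obtain ⟨a,b⟩ := s; obtain ⟨c,d⟩ := t; simp_all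

lemma adj_x_iff {b : V k p} : (G k p).Adj x b ↔ ∃ i, b = w i := by
  simp only [G, TreeT, SimpleGraph.fromRel_adj, x, w]
  aesop

lemma adj_w_iff {i : Fin k} {b : V k p} :
    (G k p).Adj (w i) b ↔ b = x ∨ ∃ j : Fin p, b = vv ⟨i, j⟩ := by
  simp only [G, TreeT, SimpleGraph.fromRel_adj, x, w, vv]
  aesop

lemma adj_vv_iff {s : S k p} {b : V k p} :
    (G k p).Adj (vv s) b ↔ b = w s.1 ∨ b = uu s := by
  obtain ⟨i, j⟩ := s
  simp only [G, TreeT, SimpleGraph.fromRel_adj, w, vv, uu]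
  aesop

lemma adj_uu_iff {s : S k p} {b : V k p} :
    (G k p).Adj (uu s) b ↔ b = vv s := by
  obtain ⟨i, j⟩ := s
  simp only [G, TreeT, SimpleGraph.fromRel_adj, vv, uu]
  aesop

lemma vv_inj : Function.Injective (vv : S k p → V k p) := by
  intro a b h; simpa [vv] using h

lemma uu_inj : Function.Injective (uu : S k p → V k p) := by
  intro a b h; simpa [uu] using h

lemma dominates_iff {D : Set (V k p)} : Dominates (G k p) D ↔
    (x ∈ D ∨ ∃ i, w i ∈ D) ∧
    (∀ i : Fin k, w i ∉ D → (x ∈ D ∨ ∃ j : Fin p, vv ⟨i, j⟩ ∈ D)) ∧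
    (∀ s : S k p, vv s ∉ D → (w s.1 ∈ D ∨ uu s ∈ D)) ∧
    (∀ s : S k p, uu s ∉ D → vv s ∈ D) := by
  constructor
  · intro hD
    refine ⟨?_, ?_, ?_, ?_⟩
    · by_cases hx : x ∈ D
      · exact Or.inl hx
      · obtain ⟨z, hz, hadj⟩ := hD x hx
        obtain ⟨i, rfl⟩ := adj_x_iff.mp hadj.symm
        exact Or.inr ⟨i, hz⟩
    · intro i hi
      obtain ⟨z, hz, hadj⟩ := hD (w i) hi
      rcases adj_w_iff.mp hadj.symm with rfl | ⟨j, rfl⟩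
      · exact Or.inl hz
      · exact Or.inr ⟨j, hz⟩
    · intro s hs
      obtain ⟨z, hz, hadj⟩ := hD (vv s) hs
      rcases adj_vv_iff.mp hadj.symm with rfl | rfl
      · exact Or.inl hz
      · exact Or.inr hz
    · intro s hs
      obtain ⟨z, hz, hadj⟩ := hD (uu s) hs
      rw [adj_uu_iff.mp hadj.symm] at hz
      exact hz
  · rintro ⟨h1, h2, h3, h4⟩ z hz
    rcases z with u | (i | (s | s))
    · cases u
      rcases h1 with hx | ⟨i, hi⟩
      · exact absurd hx hz
      · exact ⟨w i, hi, (adj_x_iff.mpr ⟨i, rfl⟩).symm⟩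
    · rcases h2 i hz with hx | ⟨j, hj⟩
      · exact ⟨x, hx, (adj_w_iff.mpr (Or.inl rfl)).symm⟩
      · exact ⟨vv ⟨i, j⟩, hj, (adj_w_iff.mpr (Or.inr ⟨j, rfl⟩)).symm⟩
    · rcases h3 s hz with hw | hu
      · exact ⟨w s.1, hw, (adj_vv_iff.mpr (Or.inl rfl)).symm⟩
      · exact ⟨uu s, hu, (adj_vv_iff.mpr (Or.inr rfl)).symm⟩
    · exact ⟨vv s, h4 s hz, (adj_uu_iff.mpr rfl).symm⟩

/-- the "fiber" map -/
def g : V k p → Option (S k p)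
  | .inl _ => none
  | .inr (.inl _) => none
  | .inr (.inr (.inl s)) => some s
  | .inr (.inr (.inr s)) => some s

lemma card_optS : Fintype.card (Option (S k p)) = k * p + 1 := by
  simp [Fintype.card_option, Fintype.card_sigma, mul_comm]

lemma image_g_eq_univ {D : Set (V k p)} (hD : Dominates (G k p) D) :
    g '' D = Set.univ := by
  obtain ⟨h1, h2, h3, h4⟩ := dominates_iff.mp hD
  apply Set.eq_univ_of_forall
  rintro (_ | s)
  · rcases h1 with hx | ⟨i, hi⟩
    · exact ⟨x, hx, rfl⟩
    · exact ⟨w i, hi, rfl⟩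
  · by_cases hv : vv s ∈ D
    · exact ⟨vv s, hv, rfl⟩
    · rcases h3 s hv with hw | hu
      · by_cases hu' : uu s ∈ D
        · exact ⟨uu s, hu', rfl⟩
        · exact ⟨vv s, h4 s hu', rfl⟩
      · exact ⟨uu s, hu, rfl⟩

lemma lower_bound {D : Set (V k p)} (hD : Dominates (G k p) D) :
    k * p + 1 ≤ D.ncard := by
  calc k * p + 1 = (Set.univ : Set (Option (S k p))).ncard := by
        rw [Set.ncard_univ, Nat.card_eq_fintype_card, card_optS]
    _ = (g '' D).ncard := by rw [image_g_eq_univ hD]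
    _ ≤ D.ncard := Set.ncard_image_le D.toFinite

lemma D0_dom : Dominates (G k p) (insert x (Set.range vv)) := by
  rw [dominates_iff]
  refine ⟨Or.inl (by simp), fun i _ => Or.inl (by simp), fun s hs => ?_, fun s _ => ?_⟩
  · exact absurd (by simp : vv s ∈ _) hs
  · simp

lemma x_ne_vv {s : S k p} : x ≠ vv s := by simp [x, vv]
lemma x_ne_uu {s : S k p} : x ≠ uu s := by simp [x, uu]
lemma w_ne_vv {i : Fin k} {s : S k p} : w i ≠ vv s := by simp [w, vv]
lemma w_ne_uu {i : Fin k} {s : S k p} : w i ≠ uu s := by simp [w, uu]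
lemma vv_ne_uu {s t : S k p} : vv s ≠ uu t := by simp [vv, uu]
lemma x_ne_w {i : Fin k} : (x : V k p) ≠ w i := by simp [x, w]

lemma card_S : Fintype.card (S k p) = k * p := by
  simp [Fintype.card_sigma, mul_comm]

lemma D0_card : (insert x (Set.range (vv : S k p → V k p))).ncard = k * p + 1 := by
  have h1 : (Set.range (vv : S k p → V k p)).ncard = k * p := by
    rw [← Set.image_univ, Set.ncard_image_of_injOn vv_inj.injOn,
      Set.ncard_univ, Nat.card_eq_fintype_card, card_S]
  rw [Set.ncard_insert_of_notMem (fun h => by obtain ⟨s, hs⟩ := h; exact x_ne_vv hs.symm), h1]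

lemma domN_eq : domN (G k p) = k * p + 1 := by
  apply le_antisymm
  · exact Nat.sInf_le (show k * p + 1 ∈ {n | ∃ D, Dominates (G k p) D ∧ D.ncard = n} from
      ⟨insert x (Set.range vv), D0_dom, D0_card⟩)
  · apply le_csInf ⟨k * p + 1, show ∃ D, Dominates (G k p) D ∧ D.ncard = k * p + 1 from
      ⟨insert x (Set.range vv), D0_dom, D0_card⟩⟩
    rintro n ⟨D, hD, rfl⟩
    exact lower_bound hD

/-! ### Parametrization of minimum dominating sets -/

def top : Option (Fin k) → V k p
  | none => x
  | some i => w i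

def choice (f : S k p → Bool) : Set (V k p) :=
  vv '' {s | f s = true} ∪ uu '' {s | f s = true}ᶜ

def Phi (o : Option (Fin k)) (f : S k p → Bool) : Set (V k p) :=
  insert (top o) (choice f)

def Good (o : Option (Fin k)) (f : S k p → Bool) : Prop :=
  ∀ i0, o = some i0 → ∀ i, i ≠ i0 → ∃ j : Fin p, f ⟨i, j⟩ = true

lemma top_ne_vv {o : Option (Fin k)} {s : S k p} : top o ≠ vv s := by
  cases o <;> simp [top, x_ne_vv, w_ne_vv]

lemma top_ne_uu {o : Option (Fin k)} {s : S k p} : top o ≠ uu s := by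
  cases o <;> simp [top, x_ne_uu, w_ne_uu]

lemma vv_mem_choice {f : S k p → Bool} {s : S k p} : vv s ∈ choice f ↔ f s = true := by
  constructor
  · rintro (⟨t, ht, h⟩ | ⟨t, ht, h⟩)
    · rwa [← vv_inj h]
    · exact absurd h.symm vv_ne_uu
  · intro h; exact Or.inl ⟨s, h, rfl⟩

lemma uu_mem_choice {f : S k p → Bool} {s : S k p} : uu s ∈ choice f ↔ f s = false := by
  constructor
  · rintro (⟨t, ht, h⟩ | ⟨t, ht, h⟩)
    · exact absurd h vv_ne_uu
    · rw [← uu_inj h]; simpa using ht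
  · intro h
    exact Or.inr ⟨s, by simp [h], rfl⟩

lemma x_not_mem_choice {f : S k p → Bool} : x ∉ choice f := by
  rintro (⟨t, ht, h⟩ | ⟨t, ht, h⟩)
  · exact x_ne_vv h.symm
  · exact x_ne_uu h.symm

lemma w_not_mem_choice {f : S k p → Bool} {i : Fin k} : w i ∉ choice f := by
  rintro (⟨t, ht, h⟩ | ⟨t, ht, h⟩)
  · exact w_ne_vv h.symm
  · exact w_ne_uu h.symm

lemma vv_mem_Phi {o : Option (Fin k)} {f : S k p → Bool} {s : S k p} :
    vv s ∈ Phi o f ↔ f s = true := by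
  simp only [Phi, Set.mem_insert_iff, vv_mem_choice]
  exact or_iff_right (fun h => top_ne_vv h.symm)

lemma uu_mem_Phi {o : Option (Fin k)} {f : S k p → Bool} {s : S k p} :
    uu s ∈ Phi o f ↔ f s = false := by
  simp only [Phi, Set.mem_insert_iff, uu_mem_choice]
  exact or_iff_right (fun h => top_ne_uu h.symm)

lemma x_mem_Phi {o : Option (Fin k)} {f : S k p → Bool} :
    x ∈ Phi o f ↔ o = none := by
  simp only [Phi, Set.mem_insert_iff]
  constructor
  · rintro (h | h)
    · cases o with
      | none => rfl
      | some i => exact absurd h x_ne_w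
    · exact absurd h x_not_mem_choice
  · rintro rfl; exact Or.inl rfl

lemma w_mem_Phi {o : Option (Fin k)} {f : S k p → Bool} {i : Fin k} :
    w i ∈ Phi o f ↔ o = some i := by
  simp only [Phi, Set.mem_insert_iff]
  constructor
  · rintro (h | h)
    · cases o with
      | none => exact absurd h.symm x_ne_w
      | some i' => rw [show i' = i by simpa [w, top] using h.symm]
    · exact absurd h w_not_mem_choice
  · rintro rfl; exact Or.inl rfl

lemma Phi_injective :
    Function.Injective (fun q : Option (Fin k) × (S k p → Bool) => Phi q.1 q.2) := by
  rintro ⟨o, f⟩ ⟨o', f'⟩ h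
  simp only at h
  have ho : o = o' := by
    cases o with
    | none =>
      have : x ∈ Phi o' f' := h ▸ x_mem_Phi.mpr rfl
      exact (x_mem_Phi.mp this).symm
    | some i =>
      have : w i ∈ Phi o' f' := h ▸ w_mem_Phi.mpr rfl
      exact (w_mem_Phi.mp this).symm
  have hf : f = f' := by
    funext s
    cases hfs : f s with
    | true => exact ((vv_mem_Phi.mp (h ▸ vv_mem_Phi.mpr hfs)).symm)
    | false => exact ((uu_mem_Phi.mp (h ▸ uu_mem_Phi.mpr hfs)).symm)
  rw [ho, hf]

lemma choice_ncard {f : S k p → Bool} : (choice f).ncard = k * p := by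
  rw [choice, Set.ncard_union_eq]
  · rw [Set.ncard_image_of_injOn vv_inj.injOn, Set.ncard_image_of_injOn uu_inj.injOn,
      Set.ncard_add_ncard_compl, Nat.card_eq_fintype_card, card_S]
  · rw [Set.disjoint_left]
    rintro a ⟨t, ht, rfl⟩ ⟨t', ht', h⟩
    exact vv_ne_uu h.symm

lemma Phi_ncard {o : Option (Fin k)} {f : S k p → Bool} : (Phi o f).ncard = k * p + 1 := by
  rw [Phi, Set.ncard_insert_of_notMem ?_ (Set.toFinite _), choice_ncard]
  cases o with
  | none => exact x_not_mem_choice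
  | some i => exact w_not_mem_choice

lemma Phi_dominates {o : Option (Fin k)} {f : S k p → Bool} (hg : Good o f) :
    Dominates (G k p) (Phi o f) := by
  rw [dominates_iff]
  refine ⟨?_, ?_, ?_, ?_⟩
  · cases o with
    | none => exact Or.inl (x_mem_Phi.mpr rfl)
    | some i => exact Or.inr ⟨i, w_mem_Phi.mpr rfl⟩
  · intro i hi
    cases o with
    | none => exact Or.inl (x_mem_Phi.mpr rfl)
    | some i0 =>
      have hne : i ≠ i0 := fun h => hi (h ▸ w_mem_Phi.mpr rfl)
      obtain ⟨j, hj⟩ := hg i0 rfl i hne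
      exact Or.inr ⟨j, vv_mem_Phi.mpr hj⟩
  · intro s hs
    have : f s = false := by
      cases hfs : f s with
      | true => exact absurd (vv_mem_Phi.mpr hfs) hs
      | false => rfl
    exact Or.inr (uu_mem_Phi.mpr this)
  · intro s hs
    have : f s = true := by
      cases hfs : f s with
      | false => exact absurd (uu_mem_Phi.mpr hfs) hs
      | true => rfl
    exact vv_mem_Phi.mpr this

lemma minDomSet_iff {D : Set (V k p)} :
    MinDomSet (G k p) D ↔ ∃ o f, Good o f ∧ D = Phi o f := by
  constructor
  · rintro ⟨hdom, hcard⟩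
    rw [domN_eq] at hcard
    classical
    -- injectivity of g on D
    have himg : g '' D = Set.univ := image_g_eq_univ hdom
    have hinj : Set.InjOn g D := by
      apply Set.injOn_of_ncard_image_eq _ D.toFinite
      rw [himg, Set.ncard_univ, Nat.card_eq_fintype_card, card_optS, hcard]
    obtain ⟨h1, h2, h3, h4⟩ := dominates_iff.mp hdom
    have hnotboth : ∀ s : S k p, ¬(vv s ∈ D ∧ uu s ∈ D) := by
      rintro s ⟨hv, hu⟩
      exact vv_ne_uu (hinj hv hu rfl)
    set f : S k p → Bool := fun s => if vv s ∈ D then true else false with hf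
    have hfv : ∀ s, (f s = true ↔ vv s ∈ D) := by
      intro s; simp [hf]
    have hfu : ∀ s, (f s = false ↔ uu s ∈ D) := by
      intro s
      constructor
      · intro h
        have hv : vv s ∉ D := by
          intro hv; simp [hf, hv] at h
        by_contra hu
        exact hv (h4 s hu)
      · intro hu
        have : vv s ∉ D := fun hv => hnotboth s ⟨hv, hu⟩
        simp [hf, this]
    -- the unique "top" vertex
    rcases h1 with hx | ⟨i0, hi0⟩
    · refine ⟨none, f, fun i0 h => by simp at h, ?_⟩
      ext z
      rcases z with u | (i | (s | s))
      · cases u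
        rw [show (Sum.inl () : V k p) = x from rfl]
        exact ⟨fun _ => x_mem_Phi.mpr rfl, fun _ => hx⟩
      · constructor
        · intro hw
          exact absurd (hinj hx hw rfl) x_ne_w
        · intro hw
          exact absurd (w_mem_Phi.mp hw) (by simp)
      · rw [show (Sum.inr (Sum.inr (Sum.inl s)) : V k p) = vv s from rfl, vv_mem_Phi]
        exact (hfv s).symm
      · rw [show (Sum.inr (Sum.inr (Sum.inr s)) : V k p) = uu s from rfl, uu_mem_Phi]
        exact (hfu s).symm
    · have hxD : x ∉ D := fun hx => x_ne_w (hinj hx hi0 rfl)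
      have hwD : ∀ i, i ≠ i0 → w i ∉ D := by
        intro i hne hw
        exact hne (by simpa [w] using hinj hw hi0 rfl)
      refine ⟨some i0, f, ?_, ?_⟩
      · rintro i0' h i hne
        obtain rfl : i0' = i0 := by simpa using h.symm
        rcases h2 i (hwD i hne) with hx | ⟨j, hj⟩
        · exact absurd hx hxD
        · exact ⟨j, (hfv _).mpr hj⟩
      · ext z
        rcases z with u | (i | (s | s))
        · cases u
          constructor
          · intro hx; exact absurd hx hxD
          · intro hx; exact absurd (x_mem_Phi.mp hx) (by simp)
        · rw [show (Sum.inr (Sum.inl i) : V k p) = w i from rfl, w_mem_Phi, Option.some_inj]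
          constructor
          · intro hw
            by_contra hne
            exact hwD i (fun h => hne h.symm) hw
          · rintro rfl; exact hi0
        · rw [show (Sum.inr (Sum.inr (Sum.inl s)) : V k p) = vv s from rfl, vv_mem_Phi]
          exact (hfv s).symm
        · rw [show (Sum.inr (Sum.inr (Sum.inr s)) : V k p) = uu s from rfl, uu_mem_Phi]
          exact (hfu s).symm
  · rintro ⟨o, f, hg, rfl⟩
    exact ⟨Phi_dominates hg, by rw [Phi_ncard, domN_eq]⟩

/-! ### Counting -/

lemma nat_card_sigma {ι : Type*} [Fintype ι] (β : ι → Type*) [∀ i, Finite (β i)] :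
    Nat.card (Σ i, β i) = ∑ i, Nat.card (β i) := by
  classical
  letI : ∀ i, Fintype (β i) := fun i => Fintype.ofFinite _
  simp [Nat.card_eq_fintype_card, Fintype.card_sigma]

lemma card_nonzero_fun : Nat.card {h : Fin p → Bool // ∃ j, h j = true} = 2 ^ p - 1 := by
  classical
  have e : {h : Fin p → Bool // ∃ j, h j = true}
      ≃ {h : Fin p → Bool // ¬(h = fun _ => false)} :=
    Equiv.subtypeEquivRight (fun h => by
      constructor
      · rintro ⟨j, hj⟩ hc
        rw [hc] at hj
        simp at hj
      · intro hne
        by_contra hno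
        push_neg at hno
        apply hne
        funext j
        have := hno j
        revert this
        cases h j <;> simp)
  rw [Nat.card_congr e, Nat.card_eq_fintype_card, Fintype.card_subtype_compl,
    Fintype.card_subtype_eq, Fintype.card_fun]
  simp

lemma card_good_some (i0 : Fin k) :
    Nat.card {f : S k p → Bool // ∀ i, i ≠ i0 → ∃ j : Fin p, f ⟨i, j⟩ = true}
      = 2 ^ p * (2 ^ p - 1) ^ (k - 1) := by
  classical
  have e1 : {f : S k p → Bool // ∀ i, i ≠ i0 → ∃ j : Fin p, f ⟨i, j⟩ = true}
      ≃ ∀ i : Fin k, {h : Fin p → Bool // i ≠ i0 → ∃ j, h j = true} :=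
    (Equiv.subtypeEquiv
        (p := fun f : S k p → Bool => ∀ i, i ≠ i0 → ∃ j : Fin p, f ⟨i, j⟩ = true)
        (q := fun g : ∀ _ : Fin k, Fin p → Bool => ∀ i, i ≠ i0 → ∃ j, g i j = true)
        (Equiv.piCurry fun _ _ => Bool) (fun f => Iff.rfl)).trans
      (Equiv.subtypePiEquivPi (p := fun (i : Fin k) (h : Fin p → Bool) => i ≠ i0 → ∃ j, h j = true))
  rw [Nat.card_congr e1, Nat.card_pi]
  have h0 : Nat.card {h : Fin p → Bool // i0 ≠ i0 → ∃ j, h j = true} = 2 ^ p := by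
    rw [Nat.card_congr (Equiv.subtypeUnivEquiv (fun h hne => absurd rfl hne))]
    simp [Nat.card_eq_fintype_card]
  have hrest : ∏ i ∈ Finset.univ.erase i0,
      Nat.card {h : Fin p → Bool // i ≠ i0 → ∃ j, h j = true} = (2 ^ p - 1) ^ (k - 1) := by
    rw [Finset.prod_congr rfl (fun i hi' => by
      rw [Nat.card_congr (Equiv.subtypeEquivRight (fun h =>
        ⟨fun H => H (Finset.ne_of_mem_erase hi'), fun H _ => H⟩)), card_nonzero_fun])]
    rw [Finset.prod_const, Finset.card_erase_of_mem (Finset.mem_univ i0),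
      Finset.card_univ, Fintype.card_fin]
  rw [← Finset.mul_prod_erase Finset.univ _ (Finset.mem_univ i0), h0, hrest]

lemma card_good :
    Nat.card {q : Option (Fin k) × (S k p → Bool) // Good q.1 q.2}
      = 2 ^ (k * p) + k * (2 ^ p * (2 ^ p - 1) ^ (k - 1)) := by
  rw [Nat.card_congr (Equiv.subtypeProdEquivSigmaSubtype Good), nat_card_sigma,
    Fintype.sum_option]
  have hnone : Nat.card {f : S k p → Bool // Good none f} = 2 ^ (k * p) := by
    rw [Nat.card_congr (Equiv.subtypeUnivEquiv (p := fun f : S k p → Bool => Good none f)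
      (fun f i0 h => by cases h))]
    simp [Nat.card_eq_fintype_card, Fintype.card_fun, card_S]
  have hsome : ∀ i0 : Fin k, Nat.card {f : S k p → Bool // Good (some i0) f}
      = 2 ^ p * (2 ^ p - 1) ^ (k - 1) := by
    intro i0
    rw [Nat.card_congr (Equiv.subtypeEquivRight (fun f =>
      ⟨fun H => H i0 rfl, fun H i0' h => by
        obtain rfl : i0' = i0 := by simpa using h.symm
        exact H⟩)), card_good_some]
  rw [hnone, Finset.sum_congr rfl (fun i0 _ => hsome i0), Finset.sum_const,
    Finset.card_univ, Fintype.card_fin, smul_eq_mul]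

lemma setOf_minDomSet :
    {D : Set (V k p) | MinDomSet (G k p) D}
      = (fun q : Option (Fin k) × (S k p → Bool) => Phi q.1 q.2) ''
        {q | Good q.1 q.2} := by
  ext D
  simp only [Set.mem_setOf_eq, Set.mem_image, minDomSet_iff]
  constructor
  · rintro ⟨o, f, hg, rfl⟩
    exact ⟨⟨o, f⟩, hg, rfl⟩
  · rintro ⟨⟨o, f⟩, hg, rfl⟩
    exact ⟨o, f, hg, rfl⟩

lemma numMinDomSets_eq :
    numMinDomSets (G k p) = 2 ^ (k * p) + k * (2 ^ p * (2 ^ p - 1) ^ (k - 1)) := by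
  rw [numMinDomSets, setOf_minDomSet, Set.ncard_image_of_injOn Phi_injective.injOn,
    ← Nat.card_coe_set_eq]
  exact card_good

end TT

/-- for positive integers `k` and `p` and `γ = k·p + 1`, the tree
`T(p, …, p)` (with `k` groups of size `p`) has domination number `γ` and exactly
`2^(γ-1) + k · 2^p · (2^p - 1)^(k-1)` minimum dominating sets. -/
theorem TreeT_const_domN_numMinDomSets (k p γ : ℕ) (hk : 0 < k) (hp : 0 < p)
    (hγ : γ = k * p + 1) :
    domN (TreeT (fun _ : Fin k => p)) = γ ∧
      numMinDomSets (TreeT (fun _ : Fin k => p)) =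
        2 ^ (γ - 1) + k * 2 ^ p * (2 ^ p - 1) ^ (k - 1) := by
  subst hγ
  refine ⟨TT.domN_eq, ?_⟩
  rw [show (TreeT (fun _ : Fin k => p)) = TT.G k p from rfl, TT.numMinDomSets_eq]
  simp [mul_assoc]
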